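/- Let ξ₁,…,ξ_M be i.i.d. uniform samples from {1,…,N}, forming the multiset I, and let ξ'₁,…,ξ'_M be an independent i.i.d. copy. For each i, let I_(i) be I with ξᵢ replaced by ξ'ᵢ. Let A : (samples) → V be any measurable map into a space V, write (û_I) = A(I), and let ψ(v; j) be a bounded measurable function of v ∈ V and j ∈ {1,…,N}. Suppose the ε-stability condition |E[ψ(A(I); ξ'ᵢ) − ψ(A(I_(i)); ξ'ᵢ)]| ≤ ε holds (expectation over I, I', and uniform i ∈ {1,…,M}). Then |E_I[ (1/M) Σ_{i=1}^M ψ(A(I); ξᵢ) − E_ξ[ψ(A(I); ξ)] ]| ≤ ε, where ξ is an independent uniform sample from {1,…,N}. -/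

import Mathlib

open MeasureTheory ProbabilityTheory

/-- Stability implies on-average generalization: if the proximal map built from an
i.i.d. mini-batch `ξ₁,…,ξ_M` (uniform on `{1,…,N}`) is ε-stable under replacing one
sample by an independent copy, then the empirical mini-batch average of `ψ` deviates
from the population mean by at most ε in expectation. -/
theorem stmt10 {Ω : Type*} [MeasurableSpace Ω] (μ : Measure Ω) [IsProbabilityMeasure μ]
    {V : Type*} [MeasurableSpace V]
    (N M : ℕ) (hN : 0 < N) (hM : 0 < M)
    (ξ ξ' : Fin M → Ω → Fin N)
    (hmeas : ∀ i, Measurable (ξ i)) (hmeas' : ∀ i, Measurable (ξ' i))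
    (hindep : iIndepFun (Sum.elim ξ ξ') μ)
    (hunif : ∀ (j : Fin M ⊕ Fin M) (s : Fin N),
      μ {ω | Sum.elim ξ ξ' j ω = s} = (N : ENNReal)⁻¹)
    (A : (Fin M → Fin N) → V) (hA : Measurable A)
    (ψ : V → Fin N → ℝ) (hψ : ∀ j, Measurable (fun v => ψ v j))
    (B : ℝ) (hψb : ∀ v j, |ψ v j| ≤ B)
    (ε : ℝ)
    (hstab : |(1 / (M : ℝ)) * ∑ i : Fin M,
        ∫ ω, (ψ (A fun j => ξ j ω) (ξ' i ω)
          - ψ (A (Function.update (fun j => ξ j ω) i (ξ' i ω))) (ξ' i ω)) ∂μ| ≤ ε) :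
    |∫ ω, ((1 / (M : ℝ)) * ∑ i : Fin M, ψ (A fun j => ξ j ω) (ξ i ω)
        - (1 / (N : ℝ)) * ∑ s : Fin N, ψ (A fun j => ξ j ω) s) ∂μ| ≤ ε := by
  classical
  set Z : Ω → (Fin M ⊕ Fin M) → Fin N := fun ω k => Sum.elim ξ ξ' k ω with hZ
  have hZmeas : Measurable Z := by
    apply measurable_pi_lambda
    rintro (i | i)
    · exact hmeas i
    · exact hmeas' i
  set w0 : ℝ := ((N : ℝ)⁻¹) ^ (Fintype.card (Fin M ⊕ Fin M)) with hw0
  -- fiber measure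
  have hfiber : ∀ c : (Fin M ⊕ Fin M) → Fin N,
      μ (Z ⁻¹' {c}) = ((N : ENNReal)⁻¹) ^ (Fintype.card (Fin M ⊕ Fin M)) := by
    intro c
    have hset : Z ⁻¹' {c} = ⋂ k, (Sum.elim ξ ξ' k) ⁻¹' {c k} := by
      ext ω
      simp [Z, funext_iff, Set.mem_iInter]
    rw [hset, hindep.meas_iInter (fun k => ⟨{c k}, measurableSet_singleton _, rfl⟩)]
    have : ∀ k : Fin M ⊕ Fin M, μ ((Sum.elim ξ ξ' k) ⁻¹' {c k}) = (N : ENNReal)⁻¹ := by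
      intro k
      have := hunif k (c k)
      exact this
    simp [this, Finset.prod_const]
  -- integral reduction
  have hint : ∀ g : ((Fin M ⊕ Fin M) → Fin N) → ℝ,
      ∫ ω, g (Z ω) ∂μ = ∑ c, w0 * g c := by
    intro g
    have hgm : Measurable g := measurable_of_countable g
    have h1 : ∫ ω, g (Z ω) ∂μ = ∫ c, g c ∂(μ.map Z) :=
      (integral_map hZmeas.aemeasurable hgm.aestronglyMeasurable).symm
    have : IsProbabilityMeasure (μ.map Z) := Measure.isProbabilityMeasure_map hZmeas.aemeasurable
    rw [h1, integral_fintype Integrable.of_finite]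
    refine Finset.sum_congr rfl fun c _ => ?_
    rw [Measure.real, Measure.map_apply hZmeas (measurableSet_singleton c), hfiber c]
    rw [smul_eq_mul, hw0]
    congr 1
    simp [ENNReal.toReal_pow, ENNReal.toReal_inv]
  -- swap identity (Lemma A)
  have lemA : ∀ i : Fin M,
      (∑ c : (Fin M ⊕ Fin M) → Fin N, ψ (A (c ∘ Sum.inl)) (c (Sum.inl i)))
        = ∑ c : (Fin M ⊕ Fin M) → Fin N,
            ψ (A (Function.update (c ∘ Sum.inl) i (c (Sum.inr i)))) (c (Sum.inr i)) := by
    intro i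
    rw [← Equiv.sum_comp
      (Equiv.arrowCongr (Equiv.swap (Sum.inl i) (Sum.inr i)) (Equiv.refl (Fin N)))
      (fun c => ψ (A (c ∘ Sum.inl)) (c (Sum.inl i)))]
    refine Finset.sum_congr rfl fun c _ => ?_
    have h1 : ((Equiv.arrowCongr (Equiv.swap (Sum.inl i) (Sum.inr i)) (Equiv.refl (Fin N))) c)
        ∘ Sum.inl = Function.update (c ∘ Sum.inl) i (c (Sum.inr i)) := by
      funext j
      by_cases hj : j = i
      · subst hj
        simp [Equiv.arrowCongr, Equiv.swap_apply_left]
      · have h2 : (Sum.inl j : Fin M ⊕ Fin M) ≠ Sum.inl i := by simp [hj]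
        have h3 : (Sum.inl j : Fin M ⊕ Fin M) ≠ Sum.inr i := by simp
        simp [Equiv.arrowCongr, Function.update_of_ne hj,
          Equiv.swap_apply_of_ne_of_ne h2 h3]
    have h2 : (Equiv.arrowCongr (Equiv.swap (Sum.inl i) (Sum.inr i)) (Equiv.refl (Fin N))) c
        (Sum.inl i) = c (Sum.inr i) := by
      simp [Equiv.arrowCongr, Equiv.swap_apply_left]
    rw [h1, h2]
  -- ghost-sample identity (Lemma B)
  have lemB : ∀ i : Fin M,
      (∑ c : (Fin M ⊕ Fin M) → Fin N, (1 / (N : ℝ)) * ∑ s : Fin N, ψ (A (c ∘ Sum.inl)) s)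
        = ∑ c : (Fin M ⊕ Fin M) → Fin N, ψ (A (c ∘ Sum.inl)) (c (Sum.inr i)) := by
    intro i
    have einv : Function.Involutive (fun p : ((Fin M ⊕ Fin M) → Fin N) × Fin N =>
        (Function.update p.1 (Sum.inr i) p.2, p.1 (Sum.inr i))) := by
      rintro ⟨c, s⟩
      simp [Function.update_idem]
    have key : (∑ c : (Fin M ⊕ Fin M) → Fin N, ∑ s : Fin N, ψ (A (c ∘ Sum.inl)) s)
        = (N : ℝ) * ∑ c : (Fin M ⊕ Fin M) → Fin N, ψ (A (c ∘ Sum.inl)) (c (Sum.inr i)) := by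
      calc (∑ c : (Fin M ⊕ Fin M) → Fin N, ∑ s : Fin N, ψ (A (c ∘ Sum.inl)) s)
          = ∑ p : ((Fin M ⊕ Fin M) → Fin N) × Fin N, ψ (A (p.1 ∘ Sum.inl)) p.2 := by
            rw [Fintype.sum_prod_type]
        _ = ∑ p : ((Fin M ⊕ Fin M) → Fin N) × Fin N,
              ψ (A ((Function.update p.1 (Sum.inr i) p.2) ∘ Sum.inl)) (p.1 (Sum.inr i)) :=
            (Equiv.sum_comp einv.toPerm
              (fun p : ((Fin M ⊕ Fin M) → Fin N) × Fin N => ψ (A (p.1 ∘ Sum.inl)) p.2)).symm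
        _ = ∑ p : ((Fin M ⊕ Fin M) → Fin N) × Fin N, ψ (A (p.1 ∘ Sum.inl)) (p.1 (Sum.inr i)) := by
            refine Finset.sum_congr rfl fun p _ => ?_
            have hc : (Function.update p.1 (Sum.inr i) p.2) ∘ Sum.inl = p.1 ∘ Sum.inl := by
              funext j
              exact Function.update_of_ne (by simp) _ _
            rw [hc]
        _ = ∑ c : (Fin M ⊕ Fin M) → Fin N, ∑ _s : Fin N, ψ (A (c ∘ Sum.inl)) (c (Sum.inr i)) := by
            rw [Fintype.sum_prod_type]
        _ = (N : ℝ) * ∑ c : (Fin M ⊕ Fin M) → Fin N, ψ (A (c ∘ Sum.inl)) (c (Sum.inr i)) := by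
            simp [Finset.sum_const, Finset.mul_sum, mul_comm]
    rw [← Finset.mul_sum, key]
    have hN' : (N : ℝ) ≠ 0 := Nat.cast_ne_zero.mpr hN.ne'
    field_simp
  -- rewrite the goal integral
  have goalEq : (∫ ω, ((1 / (M : ℝ)) * ∑ i : Fin M, ψ (A fun j => ξ j ω) (ξ i ω)
        - (1 / (N : ℝ)) * ∑ s : Fin N, ψ (A fun j => ξ j ω) s) ∂μ)
      = ∑ c : (Fin M ⊕ Fin M) → Fin N, w0 *
          ((1 / (M : ℝ)) * ∑ i : Fin M, ψ (A (c ∘ Sum.inl)) (c (Sum.inl i))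
            - (1 / (N : ℝ)) * ∑ s : Fin N, ψ (A (c ∘ Sum.inl)) s) :=
    hint (fun c => (1 / (M : ℝ)) * ∑ i : Fin M, ψ (A (c ∘ Sum.inl)) (c (Sum.inl i))
            - (1 / (N : ℝ)) * ∑ s : Fin N, ψ (A (c ∘ Sum.inl)) s)
  have stabEq : ∀ i : Fin M, (∫ ω, (ψ (A fun j => ξ j ω) (ξ' i ω)
          - ψ (A (Function.update (fun j => ξ j ω) i (ξ' i ω))) (ξ' i ω)) ∂μ)
      = ∑ c : (Fin M ⊕ Fin M) → Fin N, w0 *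
          (ψ (A (c ∘ Sum.inl)) (c (Sum.inr i))
            - ψ (A (Function.update (c ∘ Sum.inl) i (c (Sum.inr i)))) (c (Sum.inr i))) :=
    fun i => hint (fun c => ψ (A (c ∘ Sum.inl)) (c (Sum.inr i))
            - ψ (A (Function.update (c ∘ Sum.inl) i (c (Sum.inr i)))) (c (Sum.inr i)))
  rw [goalEq]
  have hM' : (M : ℝ) ≠ 0 := Nat.cast_ne_zero.mpr hM.ne'
  have sumG : ∀ i : Fin M,
      (∑ c : (Fin M ⊕ Fin M) → Fin N,
        (ψ (A (c ∘ Sum.inl)) (c (Sum.inr i))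
          - ψ (A (Function.update (c ∘ Sum.inl) i (c (Sum.inr i)))) (c (Sum.inr i))))
      = (∑ c : (Fin M ⊕ Fin M) → Fin N, ψ (A (c ∘ Sum.inl)) (c (Sum.inr i)))
        - ∑ c : (Fin M ⊕ Fin M) → Fin N,
            ψ (A (Function.update (c ∘ Sum.inl) i (c (Sum.inr i)))) (c (Sum.inr i)) :=
    fun i => Finset.sum_sub_distrib _ _
  have step1 : (∑ c : (Fin M ⊕ Fin M) → Fin N,
        ((1 / (M : ℝ)) * ∑ i : Fin M, ψ (A (c ∘ Sum.inl)) (c (Sum.inl i))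
          - (1 / (N : ℝ)) * ∑ s : Fin N, ψ (A (c ∘ Sum.inl)) s))
      = (1 / (M : ℝ)) * ∑ i : Fin M,
          ((∑ c : (Fin M ⊕ Fin M) → Fin N, ψ (A (c ∘ Sum.inl)) (c (Sum.inl i)))
            - ∑ c : (Fin M ⊕ Fin M) → Fin N,
                (1 / (N : ℝ)) * ∑ s : Fin N, ψ (A (c ∘ Sum.inl)) s) := by
    rw [Finset.sum_sub_distrib, ← Finset.mul_sum, Finset.sum_comm, Finset.sum_sub_distrib,
      Finset.sum_const, Finset.card_univ, Fintype.card_fin, mul_sub, nsmul_eq_mul]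
    congr 1
    field_simp
  have step2 : (∑ c : (Fin M ⊕ Fin M) → Fin N,
        ((1 / (M : ℝ)) * ∑ i : Fin M, ψ (A (c ∘ Sum.inl)) (c (Sum.inl i))
          - (1 / (N : ℝ)) * ∑ s : Fin N, ψ (A (c ∘ Sum.inl)) s))
      = -((1 / (M : ℝ)) * ∑ i : Fin M,
          ∑ c : (Fin M ⊕ Fin M) → Fin N,
            (ψ (A (c ∘ Sum.inl)) (c (Sum.inr i))
              - ψ (A (Function.update (c ∘ Sum.inl) i (c (Sum.inr i)))) (c (Sum.inr i)))) := by
    rw [step1]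
    rw [show (∑ i : Fin M,
          ((∑ c : (Fin M ⊕ Fin M) → Fin N, ψ (A (c ∘ Sum.inl)) (c (Sum.inl i)))
            - ∑ c : (Fin M ⊕ Fin M) → Fin N,
                (1 / (N : ℝ)) * ∑ s : Fin N, ψ (A (c ∘ Sum.inl)) s))
        = ∑ i : Fin M, -((∑ c : (Fin M ⊕ Fin M) → Fin N,
              ψ (A (c ∘ Sum.inl)) (c (Sum.inr i)))
            - ∑ c : (Fin M ⊕ Fin M) → Fin N,
              ψ (A (Function.update (c ∘ Sum.inl) i (c (Sum.inr i)))) (c (Sum.inr i)))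
      from Finset.sum_congr rfl fun i _ => by rw [lemA i, lemB i]; ring]
    simp only [sumG]
    rw [Finset.sum_neg_distrib]
    ring
  have main : (∑ c : (Fin M ⊕ Fin M) → Fin N, w0 *
          ((1 / (M : ℝ)) * ∑ i : Fin M, ψ (A (c ∘ Sum.inl)) (c (Sum.inl i))
            - (1 / (N : ℝ)) * ∑ s : Fin N, ψ (A (c ∘ Sum.inl)) s))
      = -((1 / (M : ℝ)) * ∑ i : Fin M,
          ∑ c : (Fin M ⊕ Fin M) → Fin N, w0 *
            (ψ (A (c ∘ Sum.inl)) (c (Sum.inr i))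
              - ψ (A (Function.update (c ∘ Sum.inl) i (c (Sum.inr i)))) (c (Sum.inr i)))) := by
    rw [← Finset.mul_sum, step2]
    rw [show (∑ i : Fin M, ∑ c : (Fin M ⊕ Fin M) → Fin N, w0 *
            (ψ (A (c ∘ Sum.inl)) (c (Sum.inr i))
              - ψ (A (Function.update (c ∘ Sum.inl) i (c (Sum.inr i)))) (c (Sum.inr i))))
        = ∑ i : Fin M, w0 * ∑ c : (Fin M ⊕ Fin M) → Fin N,
            (ψ (A (c ∘ Sum.inl)) (c (Sum.inr i))
              - ψ (A (Function.update (c ∘ Sum.inl) i (c (Sum.inr i)))) (c (Sum.inr i)))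
      from Finset.sum_congr rfl fun i _ => (Finset.mul_sum _ _ _).symm]
    rw [← Finset.mul_sum]
    ring
  rw [main, abs_neg]
  simp only [stabEq] at hstab
  exact hstab
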